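/- The eigenvalues of H_N^{(1,0)} = −|0⟩⟨0| + H_N^walk are exactly −2cos((2k+1)π/(2N+3)) for k = 0,...,N; in particular its smallest eigenvalue is −2cos(π/(2N+3)) and its spectral gap is −2cos(3π/(2N+3)) + 2cos(π/(2N+3)). -/

import Mathlib

open Matrix Real Finset

/-- The negative adjacency matrix of the path on vertices `0,…,N`. -/
noncomputable def walkM (N : ℕ) : Matrix (Fin (N+1)) (Fin (N+1)) ℝ :=
  Matrix.of fun i j => if (i:ℕ)+1 = (j:ℕ) ∨ (j:ℕ)+1 = (i:ℕ) then -1 else 0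

/-- `H_N^{(L,R)} = −L|0⟩⟨0| − R|N⟩⟨N| + H_N^walk`. -/
noncomputable def HLR (N : ℕ) (L R : ℝ) : Matrix (Fin (N+1)) (Fin (N+1)) ℝ :=
  walkM N + Matrix.single 0 0 (-L)
    + Matrix.single (Fin.last N) (Fin.last N) (-R)

/-- `μ` is an eigenvalue of the real matrix `M`. -/
def hasEig {n : Type*} [Fintype n] (M : Matrix n n ℝ) (μ : ℝ) : Prop :=
  ∃ v : n → ℝ, v ≠ 0 ∧ M.mulVec v = μ • v


lemma sum_pick (n m : ℕ) (f : Fin n → ℝ) :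
    (∑ j : Fin n, if (j:ℕ) = m then f j else 0) = if h : m < n then f ⟨m, h⟩ else 0 := by
  split_ifs with h
  · rw [Finset.sum_eq_single_of_mem ⟨m, h⟩ (Finset.mem_univ _)]
    · simp
    · intro j _ hj
      exact if_neg fun hc => hj (Fin.ext hc)
  · refine Finset.sum_eq_zero fun j _ => if_neg fun hc => h ?_
    exact hc ▸ j.isLt

lemma hlr_mulVec (N : ℕ) (v : Fin (N+1) → ℝ) (i : Fin (N+1)) :
    (HLR N 1 0).mulVec v i =
      (if h : (i:ℕ)+1 < N+1 then -v ⟨(i:ℕ)+1, h⟩ else 0)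
      + (∑ j : Fin (N+1), if (j:ℕ)+1 = (i:ℕ) then -v j else 0)
      + (if (i:ℕ) = 0 then -v 0 else 0) := by
  have hH : HLR N 1 0 = walkM N + Matrix.single 0 0 (-1) := by
    rw [HLR]; simp
  rw [hH]
  have h1 : (walkM N + Matrix.single 0 0 (-1)).mulVec v i
      = ∑ j : Fin (N+1), ((if (i:ℕ)+1 = (j:ℕ) ∨ (j:ℕ)+1 = (i:ℕ) then (-1:ℝ) else 0)
          + (if (0:Fin (N+1)) = i ∧ (0:Fin (N+1)) = j then (-1:ℝ) else 0)) * v j := by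
    simp [Matrix.mulVec, dotProduct, walkM, Matrix.single]
  rw [h1]
  have he : ∀ j : Fin (N+1), ((if (i:ℕ)+1 = (j:ℕ) ∨ (j:ℕ)+1 = (i:ℕ) then (-1:ℝ) else 0)
          + (if (0:Fin (N+1)) = i ∧ (0:Fin (N+1)) = j then (-1:ℝ) else 0)) * v j
      = (if (j:ℕ) = (i:ℕ)+1 then -v j else 0) + (if (j:ℕ)+1 = (i:ℕ) then -v j else 0)
        + (if (i:ℕ) = 0 then (if (j:ℕ) = 0 then -v j else 0) else 0) := by
    intro j
    have h0i : ((0:Fin (N+1)) = i) ↔ (i:ℕ) = 0 := by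
      rw [Fin.ext_iff]; simp [eq_comm]
    have h0j : ((0:Fin (N+1)) = j) ↔ (j:ℕ) = 0 := by
      rw [Fin.ext_iff]; simp [eq_comm]
    simp only [h0i, h0j]
    split_ifs <;> first | ring1 | (exfalso; omega)
  rw [Finset.sum_congr rfl (fun j _ => he j), Finset.sum_add_distrib, Finset.sum_add_distrib]
  congr 1
  · congr 1
    rw [sum_pick]
  · by_cases hi : (i:ℕ) = 0
    · simp only [if_pos hi]
      rw [sum_pick]
      rw [dif_pos (Nat.succ_pos N)]
      congr 1
    · simp [hi]

lemma tri (θ x y z : ℝ) (hx : x = z - θ) (hy : y = z + θ) :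
    Real.cos x + Real.cos y = 2 * Real.cos θ * Real.cos z := by
  subst hx hy; rw [Real.cos_sub, Real.cos_add]; ring

lemma eig_forward (N k : ℕ) (hN : 1 ≤ N) (hk : k ≤ N) :
    hasEig (HLR N 1 0) (-2 * Real.cos ((2 * k + 1) * π / (2 * N + 3))) := by
  have hπ := Real.pi_pos
  set θ : ℝ := (2 * (k:ℝ) + 1) * π / (2 * (N:ℝ) + 3) with hθ
  have hkN : (k:ℝ) ≤ (N:ℝ) := Nat.cast_le.mpr hk
  have hden : (0:ℝ) < 2 * (N:ℝ) + 3 := by positivity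
  have hθpos : 0 < θ := by rw [hθ]; positivity
  have hθlt : θ < π := by
    rw [hθ, div_lt_iff₀ hden]; nlinarith
  have hzero : Real.cos (((N:ℝ) + 1 + 1/2) * θ) = 0 := by
    rw [Real.cos_eq_zero_iff]
    refine ⟨(k:ℤ), ?_⟩
    rw [hθ]
    have hd : (2 * (N:ℝ) + 3) ≠ 0 := hden.ne'
    push_cast
    field_simp
    ring
  refine ⟨fun j => Real.cos ((((j:ℕ):ℝ) + 1/2) * θ), ?_, ?_⟩
  · intro h0
    have h1 := congrFun h0 0
    simp only [Pi.zero_apply] at h1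
    have hc : (((((0:Fin (N+1)):ℕ):ℝ) + 1/2) * θ) = θ/2 := by
      simp only [Fin.val_zero, Nat.cast_zero]; ring
    rw [hc] at h1
    have h2 : (0:ℝ) < Real.cos (θ/2) :=
      Real.cos_pos_of_mem_Ioo ⟨by linarith, by linarith⟩
    linarith [h1.le, h2]
  · funext i
    simp only [hlr_mulVec, Pi.smul_apply, smul_eq_mul]
    rcases Nat.eq_zero_or_pos (i:ℕ) with hi0 | hipos
    · -- i = 0 case
      rw [dif_pos (by omega : (i:ℕ)+1 < N+1)]
      rw [Finset.sum_eq_zero (fun j _ => if_neg (by omega))]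
      rw [if_pos hi0]
      have h := tri θ (-((((0:ℝ)) + 1/2) * θ)) ((((1:ℝ)) + 1/2) * θ)
        ((((0:ℝ)) + 1/2) * θ) (by ring) (by ring)
      rw [Real.cos_neg] at h
      simp only [Fin.val_zero, Nat.cast_zero, hi0]
      push_cast
      linear_combination -h
    · -- i ≥ 1
      have hmid : (∑ j : Fin (N+1), if (j:ℕ)+1 = (i:ℕ)
            then -(Real.cos ((((j:ℕ):ℝ) + 1/2) * θ)) else 0)
          = -(Real.cos (((((i:ℕ)-1 : ℕ):ℝ) + 1/2) * θ)) := by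
        have hc : ∀ j : Fin (N+1), ((j:ℕ)+1 = (i:ℕ)) = ((j:ℕ) = (i:ℕ)-1) :=
          fun j => propext (by omega)
        simp only [hc]
        rw [sum_pick]
        rw [dif_pos (by omega : (i:ℕ)-1 < N+1)]
      rw [hmid]
      have hcast : ((((i:ℕ)-1 : ℕ):ℝ)) = ((i:ℕ):ℝ) - 1 := by
        have : (1:ℕ) ≤ (i:ℕ) := hipos
        push_cast [this]
        ring
      rw [hcast]
      have h := tri θ ((((i:ℕ):ℝ) - 1 + 1/2) * θ) ((((i:ℕ):ℝ) + 1 + 1/2) * θ)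
        ((((i:ℕ):ℝ) + 1/2) * θ) (by ring) (by ring)
      rw [if_neg (by omega : ¬ (i:ℕ) = 0)]
      by_cases hiN : (i:ℕ)+1 < N+1
      · rw [dif_pos hiN]
        push_cast
        linear_combination -h
      · rw [dif_neg hiN]
        have hiN' : (i:ℕ) = N := by omega
        rw [hiN'] at h ⊢
        linear_combination hzero - h

lemma eig_lt (N : ℕ) {a b : ℕ} (hb : b ≤ N) (hab : a < b) :
    -2 * Real.cos ((2 * a + 1) * π / (2 * N + 3)) <
      -2 * Real.cos ((2 * b + 1) * π / (2 * N + 3)) := by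
  have hπ := Real.pi_pos
  have hden : (0:ℝ) < 2 * (N:ℝ) + 3 := by positivity
  have hbN : (b:ℝ) ≤ (N:ℝ) := Nat.cast_le.mpr hb
  have habR : (a:ℝ) < (b:ℝ) := by exact_mod_cast hab
  have h1 : (2*(a:ℝ)+1) * π / (2*(N:ℝ)+3) < (2*(b:ℝ)+1) * π / (2*(N:ℝ)+3) := by
    rw [div_lt_div_iff₀ hden hden]
    have h := mul_lt_mul_of_pos_right (show (2*(a:ℝ)+1) < 2*(b:ℝ)+1 by linarith)
      (mul_pos hπ hden)
    nlinarith [h]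
  have h2 : (2*(b:ℝ)+1) * π / (2*(N:ℝ)+3) ≤ π := by
    rw [div_le_iff₀ hden]; nlinarith
  have h3 : 0 ≤ (2*(a:ℝ)+1) * π / (2*(N:ℝ)+3) := by positivity
  have := Real.cos_lt_cos_of_nonneg_of_le_pi h3 h2 h1
  linarith

lemma eig_mem (N : ℕ) (hN : 1 ≤ N) (μ : ℝ) (h : hasEig (HLR N 1 0) μ) :
    ∃ k : ℕ, k ≤ N ∧ μ = -2 * Real.cos ((2 * k + 1) * π / (2 * N + 3)) := by
  by_contra hcon
  push_neg at hcon
  set E : Fin (N+2) → ℝ := fun i =>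
    if (i:ℕ) ≤ N then -2 * Real.cos ((2 * ((i:ℕ):ℝ) + 1) * π / (2 * N + 3)) else μ with hE
  have hinj : Function.Injective E := by
    intro a b hab
    by_cases ha : (a:ℕ) ≤ N <;> by_cases hb : (b:ℕ) ≤ N <;>
      simp only [hE, if_pos, if_neg, ha, hb, if_true, if_false] at hab
    · rcases lt_trichotomy (a:ℕ) (b:ℕ) with h1 | h1 | h1
      · exact absurd hab (ne_of_lt (eig_lt N hb h1))
      · exact Fin.ext h1
      · exact absurd hab.symm (ne_of_lt (eig_lt N ha h1))
    · exact absurd hab.symm (hcon _ ha)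
    · exact absurd hab (hcon _ hb)
    · exact Fin.ext (by omega)
  have hEig : ∀ i : Fin (N+2), hasEig (HLR N 1 0) (E i) := by
    intro i
    by_cases hi : (i:ℕ) ≤ N
    · simp only [hE, if_pos hi]; exact eig_forward N i hN hi
    · simp only [hE, if_neg hi]; exact h
  choose vs hv1 hv2 using hEig
  have hli : LinearIndependent ℝ vs :=
    Module.End.eigenvectors_linearIndependent' (Matrix.mulVecLin (HLR N 1 0)) E hinj vs
      (fun i => Module.End.hasEigenvector_iff.mpr
        ⟨Module.End.mem_eigenspace_iff.mpr (by rw [Matrix.mulVecLin_apply]; exact hv2 i),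
          hv1 i⟩)
  have hcard := hli.fintype_card_le_finrank
  rw [Module.finrank_fintype_fun_eq_card] at hcard
  simp only [Fintype.card_fin] at hcard
  omega

/-- The eigenvalues of `H_N^{(1,0)} = −|0⟩⟨0| + H_N^walk` are exactly
`−2 cos ((2k+1)π/(2N+3))` for `k = 0,…,N`; in particular its smallest
eigenvalue is `−2 cos (π/(2N+3))` and its second smallest eigenvalue is
`−2 cos (3π/(2N+3))`, so the spectral gap is their difference. -/
theorem stmt_10 (N : ℕ) (hN : 1 ≤ N) :
    (∀ μ : ℝ, hasEig (HLR N 1 0) μ ↔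
      ∃ k : ℕ, k ≤ N ∧ μ = -2 * Real.cos ((2 * k + 1) * π / (2 * N + 3))) ∧
    IsLeast {μ : ℝ | hasEig (HLR N 1 0) μ} (-2 * Real.cos (π / (2 * N + 3))) ∧
    IsLeast {μ : ℝ | hasEig (HLR N 1 0) μ ∧ μ ≠ -2 * Real.cos (π / (2 * N + 3))}
      (-2 * Real.cos (3 * π / (2 * N + 3))) := by
  have hiff : ∀ μ : ℝ, hasEig (HLR N 1 0) μ ↔
      ∃ k : ℕ, k ≤ N ∧ μ = -2 * Real.cos ((2 * k + 1) * π / (2 * N + 3)) := by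
    intro μ
    exact ⟨eig_mem N hN μ, fun ⟨k, hk, hμ⟩ => hμ ▸ eig_forward N k hN hk⟩
  have h0eq : -2 * Real.cos ((2 * ((0:ℕ):ℝ) + 1) * π / (2 * N + 3))
      = -2 * Real.cos (π / (2 * N + 3)) := by norm_num
  have h1eq : -2 * Real.cos ((2 * ((1:ℕ):ℝ) + 1) * π / (2 * N + 3))
      = -2 * Real.cos (3 * π / (2 * N + 3)) := by norm_num
  refine ⟨hiff, ⟨?_, ?_⟩, ⟨?_, ?_⟩⟩
  · show hasEig (HLR N 1 0) _
    rw [← h0eq]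
    exact eig_forward N 0 hN (Nat.zero_le N)
  · rintro μ hμ
    obtain ⟨k, hk, rfl⟩ := (hiff μ).mp hμ
    rw [← h0eq]
    rcases Nat.eq_zero_or_pos k with hk0 | hk0
    · subst hk0; exact le_refl _
    · exact (eig_lt N hk hk0).le
  · constructor
    · show hasEig (HLR N 1 0) _
      rw [← h1eq]
      exact eig_forward N 1 hN hN
    · rw [← h1eq, ← h0eq]
      exact (ne_of_lt (eig_lt N hN Nat.zero_lt_one)).symm
  · rintro μ ⟨hμ, hne⟩
    obtain ⟨k, hk, rfl⟩ := (hiff μ).mp hμ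
    rw [← h1eq]
    have hk1 : 1 ≤ k := by
      rcases Nat.eq_zero_or_pos k with hk0 | hk0
      · exfalso; apply hne; subst hk0; rw [← h0eq]
      · exact hk0
    rcases Nat.lt_or_ge 1 k with h1k | h1k
    · exact (eig_lt N hk h1k).le
    · have : k = 1 := by omega
      subst this; exact le_refl _
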